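/- arXiv:cs/0610062 — 3 statements merged into one kernel-verified Lean document; each statement's English description precedes it below -/
import Mathlib

section
/- Let f : ℕ → ℕ be any function satisfying: f x = x - 10 for all x > 100, and f x = f (f (x + 11)) for all x ≤ 100. Then for all x ≤ 100, f x = 91; equivalently, f coincides with the function F defined by F x = 91 if x ≤ 100 and F x = x - 10 otherwise. Moreover F is monotone. -/
theorem mccarthy91 (f : ℕ → ℕ)
    (h1 : ∀ x, 100 < x → f x = x - 10)
    (h2 : ∀ x, x ≤ 100 → f x = f (f (x + 11))) :
    (∀ x, x ≤ 100 → f x = 91) ∧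
    (f = fun x => if x ≤ 100 then 91 else x - 10) ∧
    Monotone (fun x : ℕ => if x ≤ 100 then 91 else x - 10) := by
  have h100 : f 100 = 91 := by
    have h := h2 100 le_rfl
    rw [h1 111 (by norm_num), h1 101 (by norm_num)] at h
    simpa using h
  have e : ∀ x, 90 ≤ x → x ≤ 99 → f x = f (x + 1) := by
    intro x hx hx'
    rw [h2 x (by omega), h1 (x + 11) (by omega)]
    have hr : x + 11 - 10 = x + 1 := by omega
    rw [hr]
  have b : ∀ k : ℕ, k ≤ 10 → f (100 - k) = 91 := by
    intro k
    induction k with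
    | zero => intro _; simpa using h100
    | succ k ih =>
      intro hk
      rw [e (100 - (k + 1)) (by omega) (by omega)]
      have hr : 100 - (k + 1) + 1 = 100 - k := by omega
      rw [hr]
      exact ih (by omega)
  have base : ∀ x, 90 ≤ x → x ≤ 100 → f x = 91 := by
    intro x hx hx'
    have := b (100 - x) (by omega)
    have hr : 100 - (100 - x) = x := by omega
    rwa [hr] at this
  have main : ∀ n, ∀ x, x ≤ 100 → 100 - x ≤ n → f x = 91 := by
    intro n
    induction n with
    | zero =>
      intro x hx h0
      have : x = 100 := by omega
      subst this; exact h100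
    | succ n ih =>
      intro x hx h
      by_cases hx9 : 90 ≤ x
      · exact base x hx9 hx
      · have f1 : f (x + 11) = 91 := ih (x + 11) (by omega) (by omega)
        have f91 : f 91 = 91 := base 91 (by norm_num) (by norm_num)
        rw [h2 x hx, f1, f91]
  have main' : ∀ x, x ≤ 100 → f x = 91 := fun x hx => main 100 x hx (by omega)
  refine ⟨main', ?_, ?_⟩
  · funext x
    by_cases hx : x ≤ 100
    · simp [hx, main' x hx]
    · simp [hx, h1 x (by omega)]
  · intro a b hab
    simp only
    split_ifs with ha hb hb <;> omega
end

section
/- Consider the free term algebra D generated by nullary constructors I and S, unary constructors E and R, and binary constructor P, together with the rewrite relation generated by (closure under contexts of) the five rules: E (R x) → R (E x); E (P x y) → P (E x) (E y); E I → R I; E S → R S; E (E x) → E x. This rewrite relation is strongly normalizing (terminating). -/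
/-- Terms representing subtyping deductions: `I` (refl), `S` (size),
`E` (expansion), `R` (reduction), `P` (product). -/
inductive Ded : Type
  | I : Ded
  | S : Ded
  | E : Ded → Ded
  | R : Ded → Ded
  | P : Ded → Ded → Ded

open Ded in
/-- The rewrite relation generated by the five expansion-elimination rules,
closed under contexts. -/
inductive DedStep : Ded → Ded → Prop
  | er (x : Ded) : DedStep (E (R x)) (R (E x))
  | ep (x y : Ded) : DedStep (E (P x y)) (P (E x) (E y))
  | ei : DedStep (E I) (R I)
  | es : DedStep (E S) (R S)
  | ee (x : Ded) : DedStep (E (E x)) (E x)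
  | congE {x y : Ded} : DedStep x y → DedStep (E x) (E y)
  | congR {x y : Ded} : DedStep x y → DedStep (R x) (R y)
  | congPL {x y : Ded} (z : Ded) : DedStep x y → DedStep (P x z) (P y z)
  | congPR {x y : Ded} (z : Ded) : DedStep x y → DedStep (P z x) (P z y)

open Ded in
/-- Weight function interpreting terms in ℕ. -/
def dedW : Ded → ℕ
  | I => 2
  | S => 2
  | E x => 2 ^ dedW x
  | R x => dedW x + 1
  | P x y => dedW x + dedW y + 1

lemma dedW_ge_two (t : Ded) : 2 ≤ dedW t := by
  induction t with
  | I => simp [dedW]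
  | S => simp [dedW]
  | E x ih =>
      calc 2 = 2 ^ 1 := by norm_num
      _ ≤ 2 ^ dedW x := Nat.pow_le_pow_right (by norm_num) (by omega)
  | R x ih => simp [dedW]; omega
  | P x y ihx ihy => simp [dedW]; omega

lemma dedStep_dec {t u : Ded} (h : DedStep t u) : dedW u < dedW t := by
  induction h with
  | er x =>
      simp only [dedW]
      have hx := dedW_ge_two x
      have : (4:ℕ) ≤ 2 ^ dedW x := by
        calc (4:ℕ) = 2 ^ 2 := by norm_num
        _ ≤ 2 ^ dedW x := Nat.pow_le_pow_right (by norm_num) hx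
      rw [pow_succ]
      omega
  | ep x y =>
      simp only [dedW]
      have hx : (4:ℕ) ≤ 2 ^ dedW x := by
        calc (4:ℕ) = 2 ^ 2 := by norm_num
        _ ≤ 2 ^ dedW x := Nat.pow_le_pow_right (by norm_num) (dedW_ge_two x)
      have hy : (4:ℕ) ≤ 2 ^ dedW y := by
        calc (4:ℕ) = 2 ^ 2 := by norm_num
        _ ≤ 2 ^ dedW y := Nat.pow_le_pow_right (by norm_num) (dedW_ge_two y)
      have : 2 ^ (dedW x + dedW y + 1) = 2 ^ dedW x * 2 ^ dedW y * 2 := by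
        rw [pow_succ, pow_add]
      rw [this]
      nlinarith
  | ei => simp [dedW]
  | es => simp [dedW]
  | ee x =>
      simp only [dedW]
      exact Nat.pow_lt_pow_right (by norm_num) Nat.lt_two_pow_self
  | congE h ih =>
      simpa only [dedW] using Nat.pow_lt_pow_right (by norm_num) ih
  | congR h ih => simp only [dedW]; omega
  | congPL z h ih => simp only [dedW]; omega
  | congPR z h ih => simp only [dedW]; omega

/-- The expansion-elimination rewrite system is strongly normalizing. -/
theorem dedStep_strongly_normalizing :
    WellFounded (fun u t => DedStep t u) :=
  Subrelation.wf (fun h => dedStep_dec h) (InvImage.wf dedW Nat.lt_wfRel.wf)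
end

section
/- Let the measure μ on pairs of terms of the free algebra generated by nullary I, S, unary S', L, R, and binary P, T be μ(u, v) = (size u + size v, size v) ∈ ℕ × ℕ ordered lexicographically. Then for each of the following rewrite rules, every occurrence of the binary symbol T in the right-hand side has arguments whose μ-measure is lexicographically strictly smaller than the μ-measure of the arguments of the root T of the left-hand side: T I x → x; T (S' x) y → S' (T x y); T (L x) y → L (T x y); T (R I) x → L x; T (R (S' x)) y → S' (T (R x) y); T (R (L x)) y → L (T (R x) y); T (P x y) (P z t) → P (T z x) (T y t); T (R (P x y)) (P z t) → P (T z (L x)) (T y (L t)). -/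
/-- Terms representing subtyping deductions for transitivity elimination:
`I` (refl), `S` (size, written `S'` in the statement as the unary (symb') rule
`Sd`), `L` (left), `R` (right), `P` (prod), `T` (trans). -/
inductive Trm : Type
  | I : Trm
  | S : Trm
  | S' : Trm → Trm
  | L : Trm → Trm
  | R : Trm → Trm
  | P : Trm → Trm → Trm
  | T : Trm → Trm → Trm

/-- The size of a term: the number of constructor occurrences. -/
def Trm.size : Trm → ℕ
  | Trm.I => 1
  | Trm.S => 1
  | Trm.S' x => x.size + 1
  | Trm.L x => x.size + 1
  | Trm.R x => x.size + 1
  | Trm.P x y => x.size + y.size + 1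
  | Trm.T x y => x.size + y.size + 1

/-- The measure of a pair of arguments of a `T`-node. -/
def μ (u v : Trm) : ℕ × ℕ := (u.size + v.size, v.size)

/-- Strict lexicographic order on `ℕ × ℕ`. -/
def LexLt (a b : ℕ × ℕ) : Prop := a.1 < b.1 ∨ (a.1 = b.1 ∧ a.2 < b.2)

open Trm in
/-- In each transitivity-elimination rule, every `T`-occurrence of the
right-hand side has arguments of strictly smaller measure than the arguments
of the root `T` of the left-hand side. -/
theorem trans_elim_measure_decreases :
    (∀ x y : Trm, LexLt (μ x y) (μ (S' x) y)) ∧              -- T (S' x) y → S' (T x y)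
    (∀ x y : Trm, LexLt (μ x y) (μ (L x) y)) ∧               -- T (L x) y → L (T x y)
    (∀ x y : Trm, LexLt (μ (R x) y) (μ (R (S' x)) y)) ∧      -- T (R (S' x)) y → S' (T (R x) y)
    (∀ x y : Trm, LexLt (μ (R x) y) (μ (R (L x)) y)) ∧       -- T (R (L x)) y → L (T (R x) y)
    (∀ x y z t : Trm, LexLt (μ z x) (μ (P x y) (P z t)) ∧
      LexLt (μ y t) (μ (P x y) (P z t))) ∧                   -- T (P x y) (P z t) → P (T z x) (T y t)
    (∀ x y z t : Trm, LexLt (μ z (L x)) (μ (R (P x y)) (P z t)) ∧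
      LexLt (μ y (L t)) (μ (R (P x y)) (P z t))) := by       -- T (R (P x y)) (P z t) → P (T z (L x)) (T y (L t))
  refine ⟨?_,?_,?_,?_,?_,?_⟩ <;> intros <;>
    simp only [μ, LexLt, Trm.size] <;> omega
end
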